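/- Let N ∈ ℕ, q ∈ {1,…,N}, and let U ∈ ℂ^{N×q} satisfy U*U = I. Suppose W ∈ (0, 1/2) with W ≥ 1/(4πN). Then for every f ∈ [−W, W], ‖e_f − UU*e_f‖₂² / ‖e_f‖₂² ≤ max( 2√π · √(∫_{−W}^{W} ‖e_g − UU*e_g‖₂² dg), (1/(NW)) · ∫_{−W}^{W} ‖e_g − UU*e_g‖₂² dg ). -/

import Mathlib

open Matrix MeasureTheory
open scoped Real

noncomputable section

/-- sampled complex exponential `e_f`. -/
def eVec (N : ℕ) (f : ℝ) : Fin N → ℂ :=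
  fun n => Complex.exp (2 * (Real.pi : ℂ) * (f : ℂ) * ((n : ℕ) : ℂ) * Complex.I)

/-- squared residual `‖e_f − P e_f‖₂²`. -/
def residP {N : ℕ} (P : Matrix (Fin N) (Fin N) ℂ) (f : ℝ) : ℝ :=
  ∑ n, ‖(eVec N f - P.mulVec (eVec N f)) n‖ ^ 2

section Aux

open Finset intervalIntegral
open scoped ComplexConjugate

lemma norm_eVec (N : ℕ) (f : ℝ) (n : Fin N) : ‖eVec N f n‖ = 1 := by
  unfold eVec
  rw [Complex.norm_exp]
  have : (2 * (Real.pi : ℂ) * (f : ℂ) * ((n : ℕ) : ℂ) * Complex.I).re = 0 := by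
    simp [Complex.mul_re, Complex.mul_im]
  rw [this, Real.exp_zero]

lemma sum_sq_eVec (N : ℕ) (f : ℝ) : ∑ n, ‖eVec N f n‖ ^ 2 = (N : ℝ) := by
  have : ∀ n : Fin N, ‖eVec N f n‖ ^ 2 = 1 := fun n => by rw [norm_eVec]; norm_num
  rw [Finset.sum_congr rfl fun n _ => this n]
  simp

/-- `∑ normSq x = (star x ⬝ᵥ x).re` -/
lemma sum_normSq_eq_re (N : ℕ) (x : Fin N → ℂ) :
    ∑ n, Complex.normSq (x n) = (star x ⬝ᵥ x).re := by
  simp only [dotProduct, Complex.re_sum, Pi.star_apply]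
  refine Finset.sum_congr rfl fun n _ => ?_
  rw [Complex.star_def, ← Complex.normSq_eq_conj_mul_self, Complex.ofReal_re]

section U
variable {N q : ℕ} (U : Matrix (Fin N) (Fin q) ℂ) (hU : Uᴴ * U = 1)

include hU in
/-- Pythagoras: residual decomposition for an arbitrary vector. -/
lemma proj_decomp (u : Fin N → ℂ) :
    ∑ n, Complex.normSq ((u - (U * Uᴴ) *ᵥ u) n)
      = ∑ n, Complex.normSq (u n) - ∑ k, Complex.normSq ((Uᴴ *ᵥ u) k) := by
  set P := U * Uᴴ with hP
  have hPH : Pᴴ = P := by rw [hP, conjTranspose_mul, conjTranspose_conjTranspose]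
  have hPP : P * P = P := by
    rw [hP, Matrix.mul_assoc, ← Matrix.mul_assoc Uᴴ, hU, Matrix.one_mul]
  have key : star (P *ᵥ u) ⬝ᵥ (P *ᵥ u) = star u ⬝ᵥ (P *ᵥ u) := by
    rw [star_mulVec, hPH, ← dotProduct_mulVec, Matrix.mulVec_mulVec, hPP]
  have key2 : star (P *ᵥ u) ⬝ᵥ u = star u ⬝ᵥ (P *ᵥ u) := by
    rw [star_mulVec, hPH, ← dotProduct_mulVec]
  have key3 : star (Uᴴ *ᵥ u) ⬝ᵥ (Uᴴ *ᵥ u) = star u ⬝ᵥ (P *ᵥ u) := by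
    rw [star_mulVec, conjTranspose_conjTranspose, dotProduct_mulVec, vecMul_vecMul,
      ← dotProduct_mulVec, ← hP]
  rw [sum_normSq_eq_re, sum_normSq_eq_re, sum_normSq_eq_re, key3]
  have expand : star (u - P *ᵥ u) ⬝ᵥ (u - P *ᵥ u)
      = star u ⬝ᵥ u - star u ⬝ᵥ (P *ᵥ u) - (star (P *ᵥ u) ⬝ᵥ u - star (P *ᵥ u) ⬝ᵥ (P *ᵥ u)) := by
    rw [star_sub, sub_dotProduct, dotProduct_sub, dotProduct_sub]
  rw [expand, key, key2]
  simp only [Complex.sub_re]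
  ring

include hU in
lemma proj_contract (u : Fin N → ℂ) :
    ∑ n, Complex.normSq ((u - (U * Uᴴ) *ᵥ u) n) ≤ ∑ n, Complex.normSq (u n) := by
  rw [proj_decomp U hU u]
  have : (0:ℝ) ≤ ∑ k, Complex.normSq ((Uᴴ *ᵥ u) k) :=
    Finset.sum_nonneg fun k _ => Complex.normSq_nonneg _
  linarith

end U

def cC (N : ℕ) : ℝ := ((N : ℝ) - 1) / 2

def vF (N : ℕ) (P : Matrix (Fin N) (Fin N) ℂ) (f : ℝ) : Fin N → ℂ :=
  eVec N f - P *ᵥ eVec N f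

def wF (N : ℕ) (f : ℝ) : Fin N → ℂ :=
  fun n => ((((n : ℕ) : ℝ) - cC N : ℝ) : ℂ) * eVec N f n

def uF (N : ℕ) (P : Matrix (Fin N) (Fin N) ℂ) (f : ℝ) : Fin N → ℂ :=
  wF N f - P *ᵥ wF N f

def vdF (N : ℕ) (P : Matrix (Fin N) (Fin N) ℂ) (f : ℝ) : Fin N → ℂ :=
  fun n => 2 * (Real.pi : ℂ) * Complex.I * (uF N P f n + (cC N : ℂ) * vF N P f n)

lemma hasDerivAt_eVec (N : ℕ) (n : Fin N) (f : ℝ) :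
    HasDerivAt (fun f : ℝ => eVec N f n)
      (2 * (Real.pi : ℂ) * Complex.I * ((n : ℕ) : ℂ) * eVec N f n) f := by
  set c : ℂ := 2 * (Real.pi : ℂ) * ((n : ℕ) : ℂ) * Complex.I with hc
  have h1 : HasDerivAt (fun f : ℝ => (f : ℂ)) 1 f := Complex.ofRealCLM.hasDerivAt
  have h2 : HasDerivAt (fun x : ℝ => Complex.exp ((x : ℂ) * c))
      (Complex.exp ((f : ℂ) * c) * (1 * c)) f := (h1.mul_const c).cexp
  have hfun : (fun x : ℝ => Complex.exp ((x : ℂ) * c)) = fun x : ℝ => eVec N x n := by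
    funext x; unfold eVec; congr 1; rw [hc]; ring
  rw [hfun] at h2
  convert h2 using 1
  unfold eVec
  rw [hc]; ring

lemma hasDerivAt_vF (N : ℕ) (P : Matrix (Fin N) (Fin N) ℂ) (f : ℝ) (n : Fin N) :
    HasDerivAt (fun f => vF N P f n) (vdF N P f n) f := by
  have hbase : ∀ m : Fin N, HasDerivAt (fun f : ℝ => eVec N f m)
      (2 * (Real.pi : ℂ) * Complex.I * ((m : ℕ) : ℂ) * eVec N f m) f := fun m =>
    hasDerivAt_eVec N m f
  have hsum : HasDerivAt (fun f : ℝ => ∑ m, P n m * eVec N f m)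
      (∑ m, P n m * (2 * (Real.pi : ℂ) * Complex.I * ((m : ℕ) : ℂ) * eVec N f m)) f :=
    HasDerivAt.fun_sum (fun m _ => (hbase m).const_mul (P n m))
  have h := (hbase n).fun_sub hsum
  have hfun : (fun f => vF N P f n) = fun f : ℝ => eVec N f n - ∑ m, P n m * eVec N f m := by
    funext g
    simp [vF, Matrix.mulVec, dotProduct]
  rw [hfun]
  refine h.congr_deriv ?_
  unfold vdF uF vF wF
  simp only [Pi.sub_apply, Matrix.mulVec, dotProduct]
  have haux : ∀ m : Fin N, P n m * (2 * (Real.pi : ℂ) * Complex.I * ((m : ℕ) : ℂ) * eVec N f m)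
      = 2 * (Real.pi : ℂ) * Complex.I * (P n m * (((((m : ℕ) : ℝ) - cC N : ℝ) : ℂ) * eVec N f m))
        + (2 * (Real.pi : ℂ) * Complex.I * (cC N : ℂ)) * (P n m * eVec N f m) := by
    intro m; push_cast; ring
  rw [Finset.sum_congr rfl fun m _ => haux m, Finset.sum_add_distrib, ← Finset.mul_sum,
    ← Finset.mul_sum]
  push_cast
  ring

lemma residP_eq_sum_normSq (N : ℕ) (P : Matrix (Fin N) (Fin N) ℂ) (f : ℝ) :
    residP P f = ∑ n, Complex.normSq (vF N P f n) := by
  unfold residP vF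
  refine Finset.sum_congr rfl fun n _ => ?_
  rw [Complex.sq_norm]

lemma residP_hasDerivAt (N : ℕ) (P : Matrix (Fin N) (Fin N) ℂ) (f : ℝ) :
    HasDerivAt (residP P)
      (2 * (∑ n, (starRingEnd ℂ) (vF N P f n) * vdF N P f n).re) f := by
  have key : ∀ n : Fin N, HasDerivAt (fun f => Complex.normSq (vF N P f n))
      (2 * ((starRingEnd ℂ) (vF N P f n) * vdF N P f n).re) f := by
    intro n
    have hv := hasDerivAt_vF N P f n
    have hre : HasDerivAt (fun f => (vF N P f n).re) ((vdF N P f n).re) f :=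
      Complex.reCLM.hasFDerivAt.comp_hasDerivAt f hv
    have him : HasDerivAt (fun f => (vF N P f n).im) ((vdF N P f n).im) f :=
      Complex.imCLM.hasFDerivAt.comp_hasDerivAt f hv
    have h := ((hre.fun_mul hre).fun_add (him.fun_mul him))
    have hfun : (fun f => Complex.normSq (vF N P f n))
        = fun f => (vF N P f n).re * (vF N P f n).re + (vF N P f n).im * (vF N P f n).im := by
      funext g; rw [Complex.normSq_apply]
    rw [hfun]
    refine h.congr_deriv ?_
    simp only [Complex.mul_re, Complex.conj_re, Complex.conj_im]
    ring
  have h := HasDerivAt.fun_sum (fun n (_ : n ∈ Finset.univ) => key n)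
  have hfun : residP P = fun f => ∑ n, Complex.normSq (vF N P f n) := by
    funext g; exact residP_eq_sum_normSq N P g
  rw [hfun]
  refine h.congr_deriv ?_
  rw [Complex.re_sum, Finset.mul_sum]

def Vc (N : ℕ) : ℝ := ∑ n : Fin N, (((n : ℕ) : ℝ) - cC N) ^ 2

lemma sum_range_cast (n : ℕ) : ∑ i ∈ Finset.range n, (i : ℝ) = n * (n - 1) / 2 := by
  induction n with
  | zero => simp
  | succ k ih => rw [Finset.sum_range_succ, ih]; push_cast; ring

lemma sum_range_sq_cast (n : ℕ) :
    ∑ i ∈ Finset.range n, (i : ℝ) ^ 2 = n * (n - 1) * (2 * n - 1) / 6 := by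
  induction n with
  | zero => simp
  | succ k ih => rw [Finset.sum_range_succ, ih]; push_cast; ring

lemma Vc_eq (N : ℕ) : Vc N = ((N : ℝ) ^ 3 - N) / 12 := by
  unfold Vc
  rw [Fin.sum_univ_eq_sum_range (fun i => ((i : ℝ) - cC N) ^ 2) N]
  have : ∀ i : ℕ, ((i : ℝ) - cC N) ^ 2 = (i : ℝ) ^ 2 - 2 * cC N * i + cC N ^ 2 := by
    intro i; ring
  rw [Finset.sum_congr rfl fun i _ => this i]
  rw [Finset.sum_add_distrib, Finset.sum_sub_distrib, ← Finset.mul_sum, Finset.sum_const,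
    Finset.card_range, sum_range_cast, sum_range_sq_cast]
  unfold cC
  push_cast
  ring

lemma Vc_nonneg (N : ℕ) : 0 ≤ Vc N := Finset.sum_nonneg fun n _ => sq_nonneg _

lemma Vc_le (N : ℕ) : Vc N ≤ (N : ℝ) ^ 3 / 12 := by
  rw [Vc_eq]
  have : (0:ℝ) ≤ N := Nat.cast_nonneg N
  linarith

lemma residP_nonneg {N : ℕ} (P : Matrix (Fin N) (Fin N) ℂ) (f : ℝ) : 0 ≤ residP P f :=
  Finset.sum_nonneg fun n _ => sq_nonneg _

lemma sum_normSq_wF (N : ℕ) (f : ℝ) : ∑ n, Complex.normSq (wF N f n) = Vc N := by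
  unfold wF Vc
  refine Finset.sum_congr rfl fun n _ => ?_
  rw [Complex.normSq_mul, Complex.normSq_ofReal]
  have h1 : Complex.normSq (eVec N f n) = 1 := by
    have := norm_eVec N f n
    rw [← Complex.sq_norm, this]; norm_num
  rw [h1]; ring

lemma residP_le_N {N q : ℕ} (U : Matrix (Fin N) (Fin q) ℂ) (hU : Uᴴ * U = 1) (f : ℝ) :
    residP (U * Uᴴ) f ≤ N := by
  rw [residP_eq_sum_normSq]
  have h := proj_contract U hU (eVec N f)
  have h2 : ∑ n, Complex.normSq (eVec N f n) = (N : ℝ) := by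
    have : ∀ n : Fin N, Complex.normSq (eVec N f n) = 1 := by
      intro n
      have := norm_eVec N f n
      rw [← Complex.sq_norm, this]; norm_num
    rw [Finset.sum_congr rfl fun n _ => this n]
    simp
  calc ∑ n, Complex.normSq (vF N (U * Uᴴ) f n) ≤ ∑ n, Complex.normSq (eVec N f n) := h
    _ = N := h2

lemma residP_differentiable {N : ℕ} (P : Matrix (Fin N) (Fin N) ℂ) :
    Differentiable ℝ (residP P) := fun f => (residP_hasDerivAt N P f).differentiableAt

lemma residP_continuous {N : ℕ} (P : Matrix (Fin N) (Fin N) ℂ) :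
    Continuous (residP P) := (residP_differentiable P).continuous

lemma abs_deriv_residP_le {N q : ℕ} (U : Matrix (Fin N) (Fin q) ℂ) (hU : Uᴴ * U = 1) (f : ℝ) :
    |deriv (residP (U * Uᴴ)) f|
      ≤ 4 * Real.pi * (Real.sqrt (Vc N) * Real.sqrt (residP (U * Uᴴ) f)) := by
  set P := U * Uᴴ with hP
  have hd := residP_hasDerivAt N P f
  rw [hd.deriv]
  set v := vF N P f
  set u := uF N P f
  set T : ℂ := ∑ n, (starRingEnd ℂ) (v n) * u n with hT
  have hsplit : ∑ n, (starRingEnd ℂ) (v n) * vdF N P f n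
      = 2 * (Real.pi : ℂ) * Complex.I * T
        + (2 * (Real.pi : ℂ) * Complex.I * (cC N : ℂ)) * ∑ n, (starRingEnd ℂ) (v n) * v n := by
    rw [hT, Finset.mul_sum, Finset.mul_sum, ← Finset.sum_add_distrib]
    refine Finset.sum_congr rfl fun n _ => ?_
    unfold vdF
    ring
  have hQ : ∑ n, (starRingEnd ℂ) (v n) * v n = ((residP P f : ℝ) : ℂ) := by
    rw [residP_eq_sum_normSq]
    rw [Complex.ofReal_sum]
    refine Finset.sum_congr rfl fun n _ => ?_
    rw [Complex.normSq_eq_conj_mul_self]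
  rw [hsplit, hQ]
  have hre : (2 * (Real.pi : ℂ) * Complex.I * T
      + (2 * (Real.pi : ℂ) * Complex.I * (cC N : ℂ)) * ((residP P f : ℝ) : ℂ)).re
      = -2 * Real.pi * T.im := by
    simp [Complex.mul_re, Complex.mul_im]
  rw [hre]
  have habs : |2 * (-2 * Real.pi * T.im)| = 4 * Real.pi * |T.im| := by
    rw [show 2 * (-2 * Real.pi * T.im) = -(4 * Real.pi * T.im) by ring, abs_neg, abs_mul,
      abs_of_nonneg (by positivity : (0:ℝ) ≤ 4 * Real.pi)]
  rw [habs]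
  have h1 : |T.im| ≤ ‖T‖ := Complex.abs_im_le_norm T
  have h2 : ‖T‖ ≤ ∑ n, ‖v n‖ * ‖u n‖ := by
    rw [hT]
    refine le_trans (norm_sum_le _ _) (le_of_eq ?_)
    refine Finset.sum_congr rfl fun n _ => ?_
    rw [norm_mul, Complex.norm_conj]
  have h3 : (∑ n, ‖v n‖ * ‖u n‖) ^ 2
      ≤ (∑ n, ‖v n‖ ^ 2) * ∑ n, ‖u n‖ ^ 2 :=
    Finset.sum_mul_sq_le_sq_mul_sq _ _ _
  have hv2 : ∑ n, ‖v n‖ ^ 2 = residP P f := by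
    rw [residP_eq_sum_normSq]
    exact Finset.sum_congr rfl fun n _ => Complex.sq_norm _
  have hu2 : ∑ n, ‖u n‖ ^ 2 ≤ Vc N := by
    have : ∑ n, ‖u n‖ ^ 2 = ∑ n, Complex.normSq (u n) :=
      Finset.sum_congr rfl fun n _ => Complex.sq_norm _
    rw [this, ← sum_normSq_wF N f]
    exact proj_contract U hU (wF N f)
  -- combine
  have hsum_nonneg : 0 ≤ ∑ n, ‖v n‖ * ‖u n‖ :=
    Finset.sum_nonneg fun n _ => mul_nonneg (norm_nonneg _) (norm_nonneg _)
  have h4 : ∑ n, ‖v n‖ * ‖u n‖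
      ≤ Real.sqrt (residP P f) * Real.sqrt (Vc N) := by
    have hle : (∑ n, ‖v n‖ * ‖u n‖) ^ 2
        ≤ residP P f * Vc N := by
      calc (∑ n, ‖v n‖ * ‖u n‖) ^ 2
          ≤ (∑ n, ‖v n‖ ^ 2) * ∑ n, ‖u n‖ ^ 2 := h3
        _ ≤ residP P f * Vc N := by
            rw [hv2]
            exact mul_le_mul_of_nonneg_left hu2 (residP_nonneg P f)
    have := Real.sqrt_le_sqrt hle
    rwa [Real.sqrt_sq hsum_nonneg, Real.sqrt_mul (residP_nonneg P f)] at this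
  calc 4 * Real.pi * |T.im| ≤ 4 * Real.pi * (Real.sqrt (residP P f) * Real.sqrt (Vc N)) := by
        apply mul_le_mul_of_nonneg_left _ (by positivity)
        exact le_trans h1 (le_trans h2 h4)
    _ = 4 * Real.pi * (Real.sqrt (Vc N) * Real.sqrt (residP P f)) := by ring

set_option maxHeartbeats 1000000 in
lemma key_analysis {R : ℝ → ℝ} {Nr V W f₀ : ℝ}
    (hNr : 1 ≤ Nr) (hV : 0 ≤ V) (hVle : V ≤ Nr ^ 3 / 12)
    (hdiff : Differentiable ℝ R)
    (hbd : ∀ f, |deriv R f| ≤ 4 * π * (Real.sqrt V * Real.sqrt (R f)))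
    (h0 : ∀ f, 0 ≤ R f) (hle : ∀ f, R f ≤ Nr)
    (hWpos : 0 < W) (hW2 : 1 / (4 * π * Nr) ≤ W)
    (hf₀ : f₀ ∈ Set.Icc (-W) W) :
    (R f₀) ^ 2 ≤ 4 * π * Nr ^ 2 * ∫ g in (-W)..W, R g := by
  have hπ : 0 < π := Real.pi_pos
  have hNr0 : (0:ℝ) < Nr := lt_of_lt_of_le one_pos hNr
  set M : ℝ := 2 * π * Real.sqrt V with hM
  have hM0 : 0 ≤ M := by positivity
  have hM2 : M ^ 2 ≤ π ^ 2 * Nr ^ 3 / 3 := by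
    have hMv : M ^ 2 = 4 * π ^ 2 * V := by
      rw [hM, mul_pow, mul_pow, Real.sq_sqrt hV]; ring
    rw [hMv]; nlinarith [hVle, sq_nonneg π]
  set s : ℝ := Real.sqrt (R f₀) with hs
  have hs0 : 0 ≤ s := Real.sqrt_nonneg _
  have hsq : s ^ 2 = R f₀ := Real.sq_sqrt (h0 f₀)
  have hsNr : s ^ 2 ≤ Nr := by rw [hsq]; exact hle f₀
  -- Step 1 : pointwise lower bound
  have step1 : ∀ g : ℝ, (max (s - M * |g - f₀|) 0) ^ 2 ≤ R g := by
    intro g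
    rcases le_or_gt (s - M * |g - f₀|) 0 with hneg | hpos
    · rw [max_eq_right hneg]; simpa using h0 g
    · rw [max_eq_left hpos.le]
      refine le_of_forall_pos_le_add fun ε hε => ?_
      set F : ℝ → ℝ := fun x => Real.sqrt (R x + ε) with hF
      have hRε : ∀ x, 0 < R x + ε := fun x => add_pos_of_nonneg_of_pos (h0 x) hε
      have hFd : ∀ x, HasDerivAt F (deriv R x / (2 * Real.sqrt (R x + ε))) x := by
        intro x
        have h1 : HasDerivAt (fun x => R x + ε) (deriv R x) x :=
          ((hdiff x).hasDerivAt).add_const ε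
        have h2 := (Real.hasDerivAt_sqrt (ne_of_gt (hRε x))).comp x h1
        refine h2.congr_deriv ?_
        ring
      have hFdiff : Differentiable ℝ F := fun x => (hFd x).differentiableAt
      have hbound : ∀ x, ‖deriv F x‖₊ ≤ Real.toNNReal M := by
        intro x
        rw [(hFd x).deriv, ← NNReal.coe_le_coe, coe_nnnorm, Real.coe_toNNReal _ hM0,
          Real.norm_eq_abs]
        have hsx : 0 < Real.sqrt (R x + ε) := Real.sqrt_pos.2 (hRε x)
        rw [abs_div, abs_of_nonneg (by positivity : (0:ℝ) ≤ 2 * Real.sqrt (R x + ε)),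
          div_le_iff₀ (by positivity)]
        have hmono : Real.sqrt (R x) ≤ Real.sqrt (R x + ε) :=
          Real.sqrt_le_sqrt (by linarith)
        calc |deriv R x| ≤ 4 * π * (Real.sqrt V * Real.sqrt (R x)) := hbd x
          _ ≤ 4 * π * (Real.sqrt V * Real.sqrt (R x + ε)) := by
              apply mul_le_mul_of_nonneg_left _ (by positivity)
              exact mul_le_mul_of_nonneg_left hmono (Real.sqrt_nonneg V)
          _ = M * (2 * Real.sqrt (R x + ε)) := by rw [hM]; ring
      have hLip := lipschitzWith_of_nnnorm_deriv_le hFdiff hbound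
      have hd : |F g - F f₀| ≤ M * |g - f₀| := by
        have h1 := hLip.dist_le_mul g f₀
        rw [Real.dist_eq, Real.dist_eq, Real.coe_toNNReal _ hM0] at h1
        exact h1
      have hFf₀ : s ≤ F f₀ := by
        rw [hs, hF]
        exact Real.sqrt_le_sqrt (by linarith)
      have hFg : s - M * |g - f₀| ≤ F g := by
        have := (abs_le.1 hd).1
        linarith
      have hsq2 : (s - M * |g - f₀|) ^ 2 ≤ (F g) ^ 2 :=
        pow_le_pow_left₀ hpos.le hFg 2
      rw [hF] at hsq2
      rwa [Real.sq_sqrt (hRε g).le] at hsq2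
  -- the lower-bound function
  set h : ℝ → ℝ := fun t => (max (s - M * t) 0) ^ 2 with hh
  have hcont_h : Continuous h := by
    apply Continuous.pow
    exact (continuous_const.sub (continuous_const.mul continuous_id)).max continuous_const
  have hcont_habs : Continuous (fun t : ℝ => h |t|) := hcont_h.comp continuous_abs
  have hmono_h : ∀ t l : ℝ, 0 ≤ l → h (t + l) ≤ h t := by
    intro t l hl0
    apply pow_le_pow_left₀ (le_max_right _ _)
    apply max_le_max _ (le_refl 0)
    nlinarith [mul_nonneg hM0 hl0]
  have hl : 0 ≤ W + f₀ := by linarith [hf₀.1]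
  have hr : 0 ≤ W - f₀ := by linarith [hf₀.2]
  -- A ≥ ∫ h |g - f₀|
  have hA1 : (∫ g in (-W)..W, h |g - f₀|) ≤ ∫ g in (-W)..W, R g := by
    apply intervalIntegral.integral_mono_on (by linarith)
      ((hcont_habs.comp (continuous_id.sub continuous_const)).intervalIntegrable _ _)
      ((hdiff.continuous).intervalIntegrable _ _)
    intro x _
    exact step1 x
  -- change of variables
  have htrans : (∫ g in (-W)..W, h |g - f₀|) = ∫ t in (-W - f₀)..(W - f₀), h |t| :=
    intervalIntegral.integral_comp_sub_right (fun t => h |t|) f₀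
  have hsplit2 : (∫ t in (-W - f₀)..(W - f₀), h |t|)
      = (∫ t in (-W - f₀)..(0:ℝ), h |t|) + ∫ t in (0:ℝ)..(W - f₀), h |t| :=
    (integral_add_adjacent_intervals (hcont_habs.intervalIntegrable _ _)
      (hcont_habs.intervalIntegrable _ _)).symm
  have hneg : (∫ t in (-W - f₀)..(0:ℝ), h |t|) = ∫ t in (0:ℝ)..(W + f₀), h |t| := by
    have h1 := intervalIntegral.integral_comp_neg (a := (0:ℝ)) (b := W + f₀) (fun t => h |t|)
    simp only [abs_neg, neg_zero] at h1
    rw [show -W - f₀ = -(W + f₀) by ring, ← h1]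
  have habs_on : ∀ b : ℝ, 0 ≤ b → (∫ t in (0:ℝ)..b, h |t|) = ∫ t in (0:ℝ)..b, h t := by
    intro b hb
    apply intervalIntegral.integral_congr
    intro t ht
    rw [Set.uIcc_of_le hb] at ht
    show h |t| = h t
    rw [abs_of_nonneg ht.1]
  -- superadditivity
  have hsuper : (∫ t in (0:ℝ)..(2*W), h t)
      ≤ (∫ t in (0:ℝ)..(W + f₀), h t) + ∫ t in (0:ℝ)..(W - f₀), h t := by
    have e1 : (∫ t in (0:ℝ)..(2*W), h t)
        = (∫ t in (0:ℝ)..(W + f₀), h t) + ∫ t in (W + f₀)..(2*W), h t :=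
      (integral_add_adjacent_intervals (hcont_h.intervalIntegrable _ _)
        (hcont_h.intervalIntegrable _ _)).symm
    have e2 : (∫ t in (W + f₀)..(2*W), h t) = ∫ t in (0:ℝ)..(W - f₀), h (t + (W + f₀)) := by
      have := intervalIntegral.integral_comp_add_right (a := (0:ℝ)) (b := W - f₀)
        (f := h) (W + f₀)
      rw [this, zero_add, show W - f₀ + (W + f₀) = 2*W by ring]
    have e3 : (∫ t in (0:ℝ)..(W - f₀), h (t + (W + f₀))) ≤ ∫ t in (0:ℝ)..(W - f₀), h t := by
      apply intervalIntegral.integral_mono_on hr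
        ((hcont_h.comp (continuous_id.add continuous_const)).intervalIntegrable _ _)
        (hcont_h.intervalIntegrable _ _)
      intro x _
      exact hmono_h x _ hl
    rw [e1, e2]
    linarith
  -- total : ∫_0^{2W} h ≤ A
  have hGA : (∫ t in (0:ℝ)..(2*W), h t) ≤ ∫ g in (-W)..W, R g := by
    rw [htrans, hsplit2, hneg, habs_on _ hl, habs_on _ hr] at hA1
    linarith
  -- explicit antiderivative
  have hpoly : ∀ Lb : ℝ, (∫ t in (0:ℝ)..Lb, (s - M*t)^2)
      = s^2*Lb - s*M*Lb^2 + M^2*Lb^3/3 := by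
    intro Lb
    have hderiv : ∀ t ∈ Set.uIcc (0:ℝ) Lb,
        HasDerivAt (fun t => s^2*t - s*M*t^2 + M^2*t^3/3) ((s - M*t)^2) t := by
      intro t _
      have p1 := (hasDerivAt_id t).const_mul (s^2)
      have p2 := (hasDerivAt_pow 2 t).const_mul (s*M)
      have p3 := (hasDerivAt_pow 3 t).const_mul (M^2/3)
      have h1 := (p1.fun_sub p2).fun_add p3
      have hfun : (fun t : ℝ => s^2*t - s*M*t^2 + M^2*t^3/3)
          = fun t : ℝ => s^2*t - s*M*t^2 + M^2/3*t^3 := by funext x; ring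
      rw [hfun]
      refine h1.congr_deriv ?_
      push_cast
      ring
    have hci : IntervalIntegrable (fun t => (s - M*t)^2) volume 0 Lb :=
      ((continuous_const.sub (continuous_const.mul continuous_id)).pow 2).intervalIntegrable _ _
    rw [intervalIntegral.integral_eq_sub_of_hasDerivAt hderiv hci]
    ring
  have hEqOn : ∀ Lb : ℝ, 0 ≤ Lb → M * Lb ≤ s →
      (∫ t in (0:ℝ)..Lb, h t) = ∫ t in (0:ℝ)..Lb, (s - M*t)^2 := by
    intro Lb hLb hMLb
    apply intervalIntegral.integral_congr
    intro t ht
    rw [Set.uIcc_of_le hLb] at ht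
    have : M * t ≤ s := le_trans (mul_le_mul_of_nonneg_left ht.2 hM0) hMLb
    rw [hh]
    simp only
    rw [max_eq_left (by linarith)]
  -- step 3 : case analysis
  rw [← hsq]
  set A := ∫ g in (-W)..W, R g with hA
  have hA0 : 0 ≤ A := intervalIntegral.integral_nonneg (by linarith) (fun x _ => h0 x)
  have hh0 : ∀ x : ℝ, 0 ≤ h x := fun x => sq_nonneg _
  rcases eq_or_lt_of_le hs0 with hs_eq | hs_pos
  · -- s = 0
    rw [← hs_eq]
    norm_num
    positivity
  rcases le_or_gt s (M * (2*W)) with hcaseB | hcaseC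
  · -- case B : s ≤ 2MW ; here M > 0
    have hMpos : 0 < M := by
      rcases lt_or_eq_of_le hM0 with h | h
      · exact h
      · exfalso; rw [← h] at hcaseB; simp at hcaseB; linarith
    have hLs : 0 ≤ s / M := div_nonneg hs0 hMpos.le
    have hsM2W : s / M ≤ 2*W := by rw [div_le_iff₀ hMpos]; linarith
    have hGmono : (∫ t in (0:ℝ)..(s/M), h t) ≤ ∫ t in (0:ℝ)..(2*W), h t := by
      have := integral_add_adjacent_intervals (μ := volume) (a := (0:ℝ)) (b := s/M) (c := 2*W)
        (hcont_h.intervalIntegrable _ _) (hcont_h.intervalIntegrable _ _)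
      rw [← this]
      have h2 := intervalIntegral.integral_nonneg (μ := volume) hsM2W (fun x _ => hh0 x)
      linarith
    have hval : (∫ t in (0:ℝ)..(s/M), h t) = s^3/(3*M) := by
      rw [hEqOn _ hLs (by rw [mul_div_cancel₀ _ (ne_of_gt hMpos)]), hpoly]
      field_simp
      ring
    have h3Ms : 3*M*s ≤ 4*π*Nr^2 := by
      have e1 : M^2 * s^2 ≤ (π^2*Nr^3/3) * Nr :=
        mul_le_mul hM2 hsNr (sq_nonneg s) (by positivity)
      have e2 : (3*M*s)^2 ≤ (4*π*Nr^2)^2 := by nlinarith [sq_nonneg (π*Nr^2), e1]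
      exact le_of_pow_le_pow_left₀ two_ne_zero (by positivity) e2
    have hfinal : s^2 * s^2 ≤ 4*π*Nr^2 * (s^3/(3*M)) := by
      have e1 : 4*π*Nr^2 * (s^3/(3*M)) - s^2*s^2 = (4*π*Nr^2 - 3*M*s) * s^3 / (3*M) := by
        field_simp
      rw [← sub_nonneg, e1]
      apply div_nonneg (mul_nonneg (by linarith) (by positivity)) (by positivity)
    calc (s^2)^2 = s^2 * s^2 := by ring
      _ ≤ 4*π*Nr^2 * (s^3/(3*M)) := hfinal
      _ = 4*π*Nr^2 * ∫ t in (0:ℝ)..(s/M), h t := by rw [hval]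
      _ ≤ 4*π*Nr^2 * ∫ t in (0:ℝ)..(2*W), h t := by
          apply mul_le_mul_of_nonneg_left hGmono (by positivity)
      _ ≤ 4*π*Nr^2 * A := mul_le_mul_of_nonneg_left hGA (by positivity)
  · -- case C : M * 2W < s
    obtain ⟨L, hL⟩ : ∃ x : ℝ, x = 2*W := ⟨_, rfl⟩
    obtain ⟨w, hw⟩ : ∃ x : ℝ, x = M * L := ⟨_, rfl⟩
    obtain ⟨E, hE⟩ : ∃ x : ℝ, x = s^2 - s*w + w^2/3 := ⟨_, rfl⟩
    have hLpos : 0 < L := by rw [hL]; linarith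
    have hw0 : 0 ≤ w := by rw [hw]; exact mul_nonneg hM0 hLpos.le
    have hws : w < s := by rw [hw, hL]; exact hcaseC
    have hE0 : 0 ≤ E := by rw [hE]; nlinarith [sq_nonneg (s - w/2), sq_nonneg w]
    have hGval : (∫ t in (0:ℝ)..L, h t) = L * E := by
      rw [hEqOn _ hLpos.le (by rw [← hw]; exact hws.le), hpoly]
      rw [hE, hw]
      ring
    have h2πNrL : 1 ≤ 2*π*Nr*L := by
      have : 4*π*Nr*W ≥ 1 := by
        rw [ge_iff_le, ← div_le_iff₀' (by positivity)]
        exact hW2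
      rw [hL]; linarith
    -- goal : s^4 ≤ 4πNr²·(L·E) then ≤ 4πNr²·A
    have hmain : (s^2)^2 ≤ 4*π*Nr^2*(L*E) := by
      rcases le_or_gt (Nr * s^2) (4*π*Nr^2*(L*E)) with hc1 | hc2
      · calc (s^2)^2 = s^2 * s^2 := by ring
          _ ≤ Nr * s^2 := mul_le_mul_of_nonneg_right hsNr (sq_nonneg s)
          _ ≤ 4*π*Nr^2*(L*E) := hc1
      · -- C2
        have hs2E : 2*E < s^2 := by
          have e1 : 4*π*Nr*(L*E) < s^2 := by
            have := (mul_lt_mul_iff_right₀ hNr0).1 (by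
              calc Nr * (4*π*Nr*(L*E)) = 4*π*Nr^2*(L*E) := by ring
                _ < Nr * s^2 := hc2)
            linarith
          have e2 : 2*E ≤ 4*π*Nr*(L*E) := by
            have : 2*E = 2 * E := rfl
            calc 2*E = (1:ℝ) * (2*E) := by ring
              _ ≤ (2*π*Nr*L) * (2*E) := by
                  apply mul_le_mul_of_nonneg_right h2πNrL (by linarith)
              _ = 4*π*Nr*(L*E) := by ring
          linarith
        have hquad : 3*s^2 - 6*s*w + 2*w^2 < 0 := by
          rw [hE] at hs2E; linarith
        have hMpos : 0 < M := by
          rcases lt_or_eq_of_le hM0 with hh1 | hh1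
          · exact hh1
          · exfalso
            have : w = 0 := by rw [hw, ← hh1]; ring
            rw [this] at hquad
            nlinarith [sq_nonneg s]
        have hkey : s^3 ≤ 4*w*E := by
          have t1 : 0 ≤ 2*w*(3*s - 2*w)*(s - w) := by
            apply mul_nonneg (mul_nonneg (by linarith) (by linarith)) (by linarith)
          have t2 : 0 ≤ (6*s*w - 3*s^2 - 2*w^2)*s := by
            apply mul_nonneg (by linarith) hs0
          rw [hE]
          nlinarith [t1, t2]
        -- squares comparison
        have hwE0 : 0 ≤ w*E := mul_nonneg hw0 hE0
        have u1 : (s^3)^2 ≤ (4*(w*E))^2 := by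
          apply pow_le_pow_left₀ (by positivity) (by linarith [hkey])
        have hsq8 : (s^2*s^2*M)^2 ≤ (4*π*Nr^2*w*E)^2 := by
          have c1 : (s^2*s^2*M)^2 = (s^3)^2 * s^2 * M^2 := by ring
          have t1 : (s^3)^2 * s^2 * M^2 ≤ (16*(w*E)^2) * s^2 * M^2 := by
            apply mul_le_mul_of_nonneg_right _ (sq_nonneg M)
            apply mul_le_mul_of_nonneg_right _ (sq_nonneg s)
            linarith [u1]
          have t2 : (16*(w*E)^2) * s^2 * M^2 ≤ (16*(w*E)^2) * Nr * M^2 := by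
            apply mul_le_mul_of_nonneg_right _ (sq_nonneg M)
            exact mul_le_mul_of_nonneg_left hsNr (by positivity)
          have t3 : (16*(w*E)^2) * Nr * M^2 ≤ (16*(w*E)^2) * Nr * (π^2*Nr^3/3) := by
            apply mul_le_mul_of_nonneg_left hM2 (by positivity)
          have t4 : (16*(w*E)^2) * Nr * (π^2*Nr^3/3) ≤ (4*π*Nr^2*w*E)^2 := by
            have hx : 0 ≤ π^2*Nr^4*(w*E)^2 :=
              mul_nonneg (mul_nonneg (sq_nonneg π) (pow_nonneg hNr0.le 4)) (sq_nonneg (w*E))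
            have hexp : (4*π*Nr^2*w*E)^2 - (16*(w*E)^2) * Nr * (π^2*Nr^3/3)
                = (32/3) * (π^2*Nr^4*(w*E)^2) := by ring
            linarith [hexp, hx]
          rw [c1]
          linarith
        have hlin : s^2*s^2*M ≤ 4*π*Nr^2*w*E :=
          le_of_pow_le_pow_left₀ two_ne_zero (by positivity) hsq8
        have : (s^2)^2 * M ≤ (4*π*Nr^2*(L*E)) * M := by
          calc (s^2)^2 * M = s^2*s^2*M := by ring
            _ ≤ 4*π*Nr^2*w*E := hlin
            _ = (4*π*Nr^2*(L*E)) * M := by rw [hw]; ring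
        exact le_of_mul_le_mul_right this hMpos
    calc (s^2)^2 ≤ 4*π*Nr^2*(L*E) := hmain
      _ = 4*π*Nr^2 * ∫ t in (0:ℝ)..L, h t := by rw [hGval]
      _ ≤ 4*π*Nr^2 * A := by
          apply mul_le_mul_of_nonneg_left _ (by positivity)
          rw [hL]; exact hGA

end Aux

/-- for an orthonormal basis `U` and `W ≥ 1/(4πN)`, the pointwise
relative residual is controlled by the average residual:
`‖e_f − UU*e_f‖₂²/‖e_f‖₂²
  ≤ max(2√π √(∫‖e_g − UU*e_g‖₂² dg), (1/(NW)) ∫‖e_g − UU*e_g‖₂² dg)`. -/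
theorem stmt15 (N q : ℕ) (hq1 : 1 ≤ q) (hqN : q ≤ N)
    (U : Matrix (Fin N) (Fin q) ℂ) (hU : Uᴴ * U = 1)
    (W : ℝ) (hW : W ∈ Set.Ioo (0 : ℝ) (1 / 2))
    (hW2 : 1 / (4 * Real.pi * N) ≤ W) :
    ∀ f ∈ Set.Icc (-W) W,
      residP (U * Uᴴ) f / (∑ n, ‖eVec N f n‖ ^ 2)
        ≤ max
            (2 * Real.sqrt Real.pi *
              Real.sqrt (∫ g in (-W)..W, residP (U * Uᴴ) g))
            ((1 / (N * W)) * ∫ g in (-W)..W, residP (U * Uᴴ) g) := by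
  intro f hf
  have hN1 : 1 ≤ N := le_trans hq1 hqN
  have hNr : (1:ℝ) ≤ (N:ℝ) := by exact_mod_cast hN1
  have hNpos : (0:ℝ) < N := by linarith
  have key := key_analysis (R := residP (U * Uᴴ)) (Nr := (N:ℝ)) (V := Vc N) (W := W) (f₀ := f)
    hNr (Vc_nonneg N) (Vc_le N) (residP_differentiable _)
    (fun g => abs_deriv_residP_le U hU g) (fun g => residP_nonneg _ g)
    (fun g => residP_le_N U hU g) hW.1 hW2 hf
  rw [sum_sq_eVec]
  have hA0 : 0 ≤ ∫ g in (-W)..W, residP (U * Uᴴ) g :=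
    intervalIntegral.integral_nonneg (by linarith [hW.1]) (fun x _ => residP_nonneg _ x)
  have hrhs : (2 * Real.sqrt Real.pi * Real.sqrt (∫ g in (-W)..W, residP (U * Uᴴ) g) * (N:ℝ))^2
      = 4 * Real.pi * (N:ℝ)^2 * ∫ g in (-W)..W, residP (U * Uᴴ) g := by
    rw [mul_pow, mul_pow, mul_pow, Real.sq_sqrt Real.pi_pos.le, Real.sq_sqrt hA0]
    ring
  have h2 : residP (U * Uᴴ) f
      ≤ 2 * Real.sqrt Real.pi * Real.sqrt (∫ g in (-W)..W, residP (U * Uᴴ) g) * (N:ℝ) := by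
    apply le_of_pow_le_pow_left₀ two_ne_zero (by positivity)
    rw [hrhs]
    exact key
  have hdiv : residP (U * Uᴴ) f / (N:ℝ)
      ≤ 2 * Real.sqrt Real.pi * Real.sqrt (∫ g in (-W)..W, residP (U * Uᴴ) g) := by
    rw [div_le_iff₀ hNpos]
    linarith [h2]
  exact le_trans hdiv (le_max_left _ _)

end
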